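/- Let P, Q be probability mass functions on a finite type with Q everywhere positive, and let G(t) = Pr_{y~Q}[P(y)/Q(y) ≤ t]. Then ∫₀^1 G(t) dt = Δ(P,Q), where Δ(P,Q) = (1/2)∑_y |P(y) − Q(y)| is the total variation distance. -/

import Mathlib

open scoped Classical BigOperators

open MeasureTheory

lemma aux_int (r c : ℝ) (hr : 0 ≤ r) :
    ∫ t in (0:ℝ)..1, (if r ≤ t then c else 0) = c * max (1 - r) 0 := by
  have hfun : (fun t : ℝ => if r ≤ t then c else 0)
      = Set.indicator (Set.Ici r) (fun _ => c) := by
    funext t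
    simp [Set.indicator, Set.mem_Ici]
  rw [intervalIntegral.integral_of_le zero_le_one]
  simp only [hfun]
  rw [MeasureTheory.setIntegral_indicator measurableSet_Ici,
    MeasureTheory.setIntegral_const]
  rcases le_or_gt r 1 with h1 | h1
  · rcases eq_or_lt_of_le hr with h0 | h0
    · have : Set.Ioc (0:ℝ) 1 ∩ Set.Ici r = Set.Ioc 0 1 := by
        ext t; simp only [Set.mem_inter_iff, Set.mem_Ioc, Set.mem_Ici]
        constructor
        · rintro ⟨h, _⟩; exact h
        · rintro ⟨ht, ht'⟩; exact ⟨⟨ht, ht'⟩, by linarith [h0 ▸ ht]⟩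
      rw [this]
      simp [← h0, max_eq_left]
    · have : Set.Ioc (0:ℝ) 1 ∩ Set.Ici r = Set.Icc r 1 := by
        ext t
        simp only [Set.mem_inter_iff, Set.mem_Ioc, Set.mem_Ici, Set.mem_Icc]
        constructor
        · rintro ⟨⟨_, h⟩, h'⟩; exact ⟨h', h⟩
        · rintro ⟨h', h⟩; exact ⟨⟨lt_of_lt_of_le h0 h', h⟩, h'⟩
      rw [this, Real.volume_real_Icc_of_le h1]
      rw [max_eq_left (by linarith)]
      rw [smul_eq_mul]; ring
  · have : Set.Ioc (0:ℝ) 1 ∩ Set.Ici r = ∅ := by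
      ext t
      simp only [Set.mem_inter_iff, Set.mem_Ioc, Set.mem_Ici, Set.mem_empty_iff_false,
        iff_false, not_and]
      rintro ⟨_, h⟩ h'; linarith
    rw [this]
    simp [max_eq_right (by linarith : 1 - r ≤ 0)]

theorem stmt10 {Y : Type*} [Fintype Y] (P Q : Y → ℝ)
    (hP0 : ∀ y, 0 ≤ P y) (hQpos : ∀ y, 0 < Q y)
    (hP1 : ∑ y, P y = 1) (hQ1 : ∑ y, Q y = 1) :
    (∫ t in (0:ℝ)..1, ∑ y ∈ Finset.univ.filter (fun y => P y / Q y ≤ t), Q y)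
      = (1 / 2) * ∑ y, |P y - Q y| := by
  have hint : ∀ y : Y, IntervalIntegrable
      (fun t => if P y / Q y ≤ t then Q y else 0) volume 0 1 := by
    intro y
    have hmono : Monotone (fun t : ℝ => if P y / Q y ≤ t then Q y else 0) := by
      intro a b hab
      by_cases ha : P y / Q y ≤ a
      · simp [ha, ha.trans hab]
      · by_cases hb : P y / Q y ≤ b <;> simp [ha, hb, (hQpos y).le]
    exact hmono.intervalIntegrable
  have hfil : ∀ t : ℝ, ∑ y ∈ Finset.univ.filter (fun y => P y / Q y ≤ t), Q y
      = ∑ y : Y, (if P y / Q y ≤ t then Q y else 0) := fun t => Finset.sum_filter _ _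
  have step1 : (∫ t in (0:ℝ)..1, ∑ y ∈ Finset.univ.filter (fun y => P y / Q y ≤ t), Q y)
      = ∑ y : Y, ∫ t in (0:ℝ)..1, (if P y / Q y ≤ t then Q y else 0) := by
    simp_rw [hfil]
    exact intervalIntegral.integral_finset_sum (fun y _ => hint y)
  rw [step1]
  have step2 : ∀ y : Y, (∫ t in (0:ℝ)..1, (if P y / Q y ≤ t then Q y else 0))
      = max (Q y - P y) 0 := by
    intro y
    rw [aux_int _ _ (div_nonneg (hP0 y) (hQpos y).le)]
    have hq := (hQpos y).ne'
    rw [mul_max_of_nonneg _ _ (hQpos y).le, mul_zero]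
    congr 1
    field_simp
  simp only [step2]
  have key : ∀ y : Y, max (Q y - P y) 0 = ((Q y - P y) + |P y - Q y|) / 2 := by
    intro y
    rw [abs_sub_comm]
    rcases le_or_gt (P y) (Q y) with h | h
    · rw [max_eq_left (by linarith), abs_of_nonneg (by linarith)]; ring
    · rw [max_eq_right (by linarith), abs_of_neg (by linarith)]; ring
  simp only [key]
  rw [← Finset.sum_div, Finset.sum_add_distrib]
  have : ∑ y : Y, (Q y - P y) = 0 := by
    rw [Finset.sum_sub_distrib, hP1, hQ1]; ring
  rw [this]
  ring
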